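/- There exists a constant C > 0 depending only on β, C_b, C_c, C_f, γ_b, γ_c, γ_f and C₀ (in particular independent of ε₁ and ε₂) such that |u'(1)| ≤ C · (ε₁⁻¹ + ε₂⁻¹). -/

import Mathlib

open Set Filter Topology

theorem stmt_1 (β C_b C_c C_f γ_b γ_c γ_f C₀ : ℝ)
    (hβ : 0 < β) (hCb : 0 < C_b) (hCc : 0 < C_c) (hCf : 0 < C_f)
    (hgb : 0 < γ_b) (hgc : 0 < γ_c) (hgf : 0 < γ_f) (hC₀ : 0 < C₀) :
    ∃ C : ℝ, 0 < C ∧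
      ∀ ε₁ ε₂ : ℝ, ε₁ ∈ Set.Ioc (0:ℝ) 1 → ε₂ ∈ Set.Ioc (0:ℝ) 1 →
      ∀ b c f u u' u'' : ℝ → ℝ,
        AnalyticOnNhd ℝ b (Set.Icc 0 1) →
        AnalyticOnNhd ℝ c (Set.Icc 0 1) →
        AnalyticOnNhd ℝ f (Set.Icc 0 1) →
        (∀ n : ℕ, ∀ x ∈ Set.Icc (0:ℝ) 1, |iteratedDeriv n b x| ≤ C_b * n.factorial * γ_b ^ n) →
        (∀ n : ℕ, ∀ x ∈ Set.Icc (0:ℝ) 1, |iteratedDeriv n c x| ≤ C_c * n.factorial * γ_c ^ n) →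
        (∀ n : ℕ, ∀ x ∈ Set.Icc (0:ℝ) 1, |iteratedDeriv n f x| ≤ C_f * n.factorial * γ_f ^ n) →
        (∀ x ∈ Set.Icc (0:ℝ) 1, β ≤ b x) →
        (∃ γ : ℝ, 0 < γ ∧ ∀ x ∈ Set.Icc (0:ℝ) 1, γ ≤ c x) →
        (∃ ρ : ℝ, 0 < ρ ∧ ∀ x ∈ Set.Icc (0:ℝ) 1, ρ ≤ c x - ε₂ / 2 * deriv b x) →
        (∀ x ∈ Set.Icc (0:ℝ) 1, HasDerivWithinAt u (u' x) (Set.Icc 0 1) x) →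
        (∀ x ∈ Set.Icc (0:ℝ) 1, HasDerivWithinAt u' (u'' x) (Set.Icc 0 1) x) →
        ContinuousOn u'' (Set.Icc 0 1) →
        (∀ x ∈ Set.Ioo (0:ℝ) 1, -ε₁ * u'' x + ε₂ * b x * u' x + c x * u x = f x) →
        u 0 = 0 → u 1 = 0 →
        (∀ x ∈ Set.Icc (0:ℝ) 1, |u x| ≤ C₀) →
        |u' 1| ≤ C * (ε₁⁻¹ + ε₂⁻¹) := by
  refine ⟨C_c * C₀ + C_f + C_b * γ_b * C₀ + C_b * C₀, by positivity, ?_⟩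
  rintro ε₁ ε₂ ⟨hε₁0, hε₁1⟩ ⟨hε₂0, hε₂1⟩ b c f u u' u'' hban hcan hfan hbbd hcbd hfbd
    hβ' _ _ hu hu' hu''c hode h0 h1 hC0
  set K : ℝ := C_c * C₀ + C_f + C_b * γ_b * C₀ with hK
  -- basic bounds
  have hb0 : ∀ x ∈ Icc (0:ℝ) 1, |b x| ≤ C_b := by
    intro x hx; have := hbbd 0 x hx; simpa using this
  have hc0 : ∀ x ∈ Icc (0:ℝ) 1, |c x| ≤ C_c := by
    intro x hx; have := hcbd 0 x hx; simpa using this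
  have hf0 : ∀ x ∈ Icc (0:ℝ) 1, |f x| ≤ C_f := by
    intro x hx; have := hfbd 0 x hx; simpa using this
  have hb1 : ∀ x ∈ Icc (0:ℝ) 1, |deriv b x| ≤ C_b * γ_b := by
    intro x hx; have := hbbd 1 x hx; simpa [iteratedDeriv_one] using this
  -- continuity facts
  have hucont : ContinuousOn u (Icc 0 1) := fun x hx => (hu x hx).continuousWithinAt
  have hu'cont : ContinuousOn u' (Icc 0 1) := fun x hx => (hu' x hx).continuousWithinAt
  have hbc : ContinuousOn b (Icc 0 1) := hban.continuousOn
  have hcc : ContinuousOn c (Icc 0 1) := hcan.continuousOn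
  have hfc : ContinuousOn f (Icc 0 1) := hfan.continuousOn
  -- the ODE holds at x = 1 by continuity
  have hode1 : -ε₁ * u'' 1 + ε₂ * b 1 * u' 1 + c 1 * u 1 = f 1 := by
    set g : ℝ → ℝ := fun x => -ε₁ * u'' x + ε₂ * b x * u' x + c x * u x - f x with hg
    have hgc : ContinuousOn g (Icc 0 1) := by
      apply ContinuousOn.sub _ hfc
      apply ContinuousOn.add
      apply ContinuousOn.add
      · exact (continuousOn_const.mul hu''c)
      · exact (continuousOn_const.mul hbc).mul hu'cont
      · exact hcc.mul hucont
    have h1mem : (1:ℝ) ∈ Icc (0:ℝ) 1 := by norm_num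
    have hne : (𝓝[Ioo (0:ℝ) 1] (1:ℝ)).NeBot := by
      rw [← mem_closure_iff_nhdsWithin_neBot, closure_Ioo one_ne_zero.symm]
      exact h1mem
    have ht1 : Tendsto g (𝓝[Ioo (0:ℝ) 1] 1) (𝓝 (g 1)) :=
      ((hgc 1 h1mem).mono Ioo_subset_Icc_self)
    have ht2 : Tendsto g (𝓝[Ioo (0:ℝ) 1] 1) (𝓝 0) := by
      refine tendsto_const_nhds.congr' ?_
      filter_upwards [self_mem_nhdsWithin] with x hx
      have hx' := hode x hx
      simp only [hg]
      linarith
    have := tendsto_nhds_unique ht1 ht2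
    simpa [hg, sub_eq_zero] using this
  have hode' : ∀ x ∈ Icc (0:ℝ) 1, x ≠ 0 → -ε₁ * u'' x + ε₂ * b x * u' x + c x * u x = f x := by
    intro x hx hx0
    rcases eq_or_lt_of_le hx.2 with h | h
    · rw [h]; exact hode1
    · exact hode x ⟨lt_of_le_of_ne hx.1 (Ne.symm hx0), h⟩
  -- Rolle: a zero of u'
  obtain ⟨ξ, hξ, hξ0⟩ : ∃ ξ ∈ Ioo (0:ℝ) 1, u' ξ = 0 := by
    apply exists_hasDerivAt_eq_zero one_pos hucont (h0.trans h1.symm)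
    intro x hx
    exact (hu x (Ioo_subset_Icc_self hx)).hasDerivAt (Icc_mem_nhds hx.1 hx.2)
  -- the auxiliary function w and its derivative
  set w : ℝ → ℝ := fun x => ε₁ * u' x - ε₂ * (b x * u x) with hw
  set W : ℝ → ℝ := fun x => ε₁ * u'' x - ε₂ * (deriv b x * u x + b x * u' x) with hW
  have hIcc : Icc ξ 1 ⊆ Icc (0:ℝ) 1 := Icc_subset_Icc hξ.1.le le_rfl
  have hwd : ∀ x ∈ Icc ξ 1, HasDerivWithinAt w (W x) (Icc ξ 1) x := by
    intro x hx
    have hx01 := hIcc hx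
    have hbd : HasDerivAt b (deriv b x) x :=
      ((hban x hx01).differentiableAt).hasDerivAt
    exact (((hu' x hx01).const_mul ε₁).sub
      (((hbd.hasDerivWithinAt.mul (hu x hx01)).const_mul ε₂))).mono hIcc
  have hWbd : ∀ x ∈ Icc ξ 1, ‖W x‖ ≤ K := by
    intro x hx
    have hx01 := hIcc hx
    have heq : ε₁ * u'' x = ε₂ * b x * u' x + c x * u x - f x := by
      have h := hode' x hx01 (ne_of_gt (hξ.1.trans_le hx.1))
      linarith
    have : W x = c x * u x - f x - ε₂ * (deriv b x * u x) := by
      rw [hW]; simp only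
      rw [heq]; ring
    rw [Real.norm_eq_abs, this]
    have h1 : |c x * u x| ≤ C_c * C₀ := by
      rw [abs_mul]
      exact mul_le_mul (hc0 x hx01) (hC0 x hx01) (abs_nonneg _) hCc.le
    have h2 : |ε₂ * (deriv b x * u x)| ≤ C_b * γ_b * C₀ := by
      rw [abs_mul, abs_mul]
      calc |ε₂| * (|deriv b x| * |u x|) ≤ 1 * (C_b * γ_b * C₀) := by
            apply mul_le_mul (by rw [abs_of_pos hε₂0]; exact hε₂1)
            · exact mul_le_mul (hb1 x hx01) (hC0 x hx01) (abs_nonneg _) (by positivity)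
            · positivity
            · norm_num
        _ = C_b * γ_b * C₀ := one_mul _
    calc |c x * u x - f x - ε₂ * (deriv b x * u x)|
        ≤ |c x * u x - f x| + |ε₂ * (deriv b x * u x)| := abs_sub _ _
      _ ≤ (|c x * u x| + |f x|) + |ε₂ * (deriv b x * u x)| :=
          add_le_add_left (abs_sub _ _) _
      _ ≤ (C_c * C₀ + C_f) + C_b * γ_b * C₀ := by
          gcongr <;> first | exact h1 | exact hf0 x hx01 | exact h2
      _ = K := by rw [hK]
  -- mean value inequality
  have hmv : ‖w 1 - w ξ‖ ≤ K * ‖(1:ℝ) - ξ‖ :=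
    (convex_Icc ξ 1).norm_image_sub_le_of_norm_hasDerivWithin_le hwd hWbd
      (left_mem_Icc.mpr hξ.2.le) (right_mem_Icc.mpr hξ.2.le)
  have hwξ : |w ξ| ≤ C_b * C₀ := by
    have : w ξ = -(ε₂ * (b ξ * u ξ)) := by rw [hw]; simp [hξ0]
    rw [this, abs_neg, abs_mul, abs_mul]
    calc |ε₂| * (|b ξ| * |u ξ|) ≤ 1 * (C_b * C₀) := by
          apply mul_le_mul (by rw [abs_of_pos hε₂0]; exact hε₂1)
          · exact mul_le_mul (hb0 ξ (Ioo_subset_Icc_self hξ)) (hC0 ξ (Ioo_subset_Icc_self hξ))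
              (abs_nonneg _) hCb.le
          · positivity
          · norm_num
      _ = C_b * C₀ := one_mul _
  have hw1 : w 1 = ε₁ * u' 1 := by rw [hw]; simp [h1]
  have hnorm1 : ‖(1:ℝ) - ξ‖ ≤ 1 := by
    rw [Real.norm_eq_abs, abs_of_nonneg (by linarith [hξ.2.le])]
    linarith [hξ.1.le]
  have hfinal : |ε₁ * u' 1| ≤ K + C_b * C₀ := by
    have h1' : |w 1 - w ξ| ≤ K := by
      calc |w 1 - w ξ| ≤ K * ‖(1:ℝ) - ξ‖ := hmv
        _ ≤ K * 1 := by
            apply mul_le_mul_of_nonneg_left hnorm1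
            positivity
        _ = K := mul_one K
    calc |ε₁ * u' 1| = |w 1 - w ξ + w ξ| := by rw [hw1]; ring_nf
      _ ≤ |w 1 - w ξ| + |w ξ| := abs_add_le _ _
      _ ≤ K + C_b * C₀ := add_le_add h1' hwξ
  have hC : (0:ℝ) < K + C_b * C₀ := by rw [hK]; positivity
  rw [abs_mul, abs_of_pos hε₁0] at hfinal
  have hdiv : |u' 1| ≤ (K + C_b * C₀) / ε₁ :=
    (le_div_iff₀ hε₁0).mpr (by rw [mul_comm]; exact hfinal)
  calc |u' 1| ≤ (K + C_b * C₀) / ε₁ := hdiv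
    _ = (K + C_b * C₀) * ε₁⁻¹ := div_eq_mul_inv _ _
    _ ≤ (K + C_b * C₀) * (ε₁⁻¹ + ε₂⁻¹) := by
        apply mul_le_mul_of_nonneg_left _ hC.le
        have : (0:ℝ) < ε₂⁻¹ := by positivity
        linarith
    _ = (C_c * C₀ + C_f + C_b * γ_b * C₀ + C_b * C₀) * (ε₁⁻¹ + ε₂⁻¹) := by rw [hK]
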